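/- There exists an absolute constant c > 0 with the following property. Let (Z,d) be a finite metric space, let P = {p_1, …, p_m} ⊆ Z with m ≥ 2 and diam(P) > 0, and let n ≥ max(m,4) be a power of two. Let β_1, …, β_m be independent random variables, each distributed with the density f of dist(diam(P), n), and define the random blocks P_i = {x ∈ P \ (P_1 ∪ ⋯ ∪ P_{i−1}) : d(x, p_i) ≤ β_i} for i = 1, …, m. Then for every y ∈ Z and every real r with 0 ≤ r ≤ diam(P)/(16 log₂ n), the expected number of indices i such that P_i non-terminally intersects B(y,r) is at most c · (r / diam(P)) · log₂ n, where B(y,r) = {z ∈ Z : d(z,y) ≤ r}. -/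

import Mathlib

open MeasureTheory
open scoped Classical

/-- The density `f` of the distribution `dist(δ, k)` where `k = 2^L`. -/
noncomputable def distDensity (δ : ℝ) (L : ℕ) (x : ℝ) : ℝ :=
  if x < δ/8 ∨ δ/4 < x then 0
  else if δ/4 - δ/(8*(L:ℝ)) ≤ x then (8*(L:ℝ)/δ) * (2 / 2^L)
  else (8*(L:ℝ)/δ) * (1/2 : ℝ) ^ ((⌊(x - δ/8) / (δ/(8*(L:ℝ)))⌋).toNat + 1)

section Aux

variable {δ : ℝ} {L : ℕ}

lemma myDistDensity_upper (hδ : 0 < δ) (hL : 2 ≤ L) (j : ℕ) (hj : j ≤ L) (x : ℝ)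
    (hx : δ/8 + ((j:ℝ)-1)*(δ/(8*(L:ℝ))) ≤ x) :
    distDensity δ L x ≤ (8*(L:ℝ)/δ) * (2 * (1/2:ℝ)^j) := by
  have hLpos : (0:ℝ) < (L:ℝ) := by positivity
  have hw : (0:ℝ) < δ/(8*(L:ℝ)) := by positivity
  have hc : (0:ℝ) ≤ 8*(L:ℝ)/δ := by positivity
  unfold distDensity
  split_ifs with h1 h2
  · positivity
  · -- second branch
    apply mul_le_mul_of_nonneg_left _ hc
    calc (2:ℝ)/2^L = 2 * (1/2:ℝ)^L := by
          rw [one_div, inv_pow]; ring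
      _ ≤ 2 * (1/2:ℝ)^j := by
          have := pow_le_pow_of_le_one (by norm_num : (0:ℝ) ≤ 1/2) (by norm_num) hj
          linarith
  · -- third branch
    gcongr
    rcases Nat.eq_zero_or_pos j with hj0 | hj0
    · subst hj0
      have : ((1:ℝ)/2) ^ ((⌊(x - δ/8) / (δ/(8*(L:ℝ)))⌋).toNat + 1) ≤ 1 :=
        pow_le_one₀ (by norm_num) (by norm_num)
      simpa using this.trans (by norm_num)
    · have hfloor : (j:ℤ) - 1 ≤ ⌊(x - δ/8) / (δ/(8*(L:ℝ)))⌋ := by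
        rw [Int.le_floor]
        push_cast
        rw [le_div_iff₀ hw]
        linarith
      have htn : j ≤ (⌊(x - δ/8) / (δ/(8*(L:ℝ)))⌋).toNat + 1 := by
        omega
      calc ((1:ℝ)/2) ^ ((⌊(x - δ/8) / (δ/(8*(L:ℝ)))⌋).toNat + 1)
          ≤ (1/2:ℝ)^j := pow_le_pow_of_le_one (by norm_num) (by norm_num) htn
        _ ≤ 2 * (1/2:ℝ)^j := by nlinarith [pow_nonneg (by norm_num : (0:ℝ) ≤ 1/2) j]

lemma myDistDensity_lower (hδ : 0 < δ) (hL : 2 ≤ L) (j : ℕ) (hj : j+1 ≤ L) (x : ℝ)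
    (hx1 : δ/8 + (j:ℝ)*(δ/(8*(L:ℝ))) ≤ x) (hx2 : x < δ/8 + ((j:ℝ)+1)*(δ/(8*(L:ℝ)))) :
    (8*(L:ℝ)/δ) * (1/2:ℝ)^(j+1) ≤ distDensity δ L x := by
  have hLpos : (0:ℝ) < (L:ℝ) := by positivity
  have hw : (0:ℝ) < δ/(8*(L:ℝ)) := by positivity
  have hc : (0:ℝ) ≤ 8*(L:ℝ)/δ := by positivity
  have hjL : (j:ℝ) + 1 ≤ (L:ℝ) := by exact_mod_cast hj
  have he : δ/4 = δ/8 + (L:ℝ)*(δ/(8*(L:ℝ))) := by field_simp; ring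
  unfold distDensity
  split_ifs with h1 h2
  · exfalso
    rcases h1 with h1 | h1
    · nlinarith [mul_nonneg (Nat.cast_nonneg j : (0:ℝ) ≤ j) hw.le]
    · rw [he] at h1
      nlinarith
  · -- second branch : here necessarily j+1 = L
    have hxL : δ/8 + ((L:ℝ)-1)*(δ/(8*(L:ℝ))) ≤ x := by
      rw [he] at h2; linarith [h2]
    have hjeq : (j:ℝ)+1 = (L:ℝ) := by
      by_contra hne
      have hlt : (j:ℝ) + 1 < (L:ℝ) := lt_of_le_of_ne hjL hne
      have hj1 : (j:ℝ) + 1 ≤ (L:ℝ) - 1 := by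
        have : (j:ℤ) + 1 < (L:ℤ) := by exact_mod_cast hlt
        have : (j:ℤ) + 1 ≤ (L:ℤ) - 1 := by omega
        have h2 : ((j:ℤ) + 1 : ℝ) ≤ ((L:ℤ) - 1 : ℝ) := by exact_mod_cast this
        push_cast at h2
        linarith
      have := mul_le_mul_of_nonneg_right hj1 hw.le
      linarith
    have hjn : j + 1 = L := by exact_mod_cast hjeq
    apply mul_le_mul_of_nonneg_left _ hc
    rw [← hjn, one_div, inv_pow]
    have hpos : (0:ℝ) ≤ ((2:ℝ)^(j+1))⁻¹ := by positivity
    calc ((2:ℝ)^(j+1))⁻¹ ≤ 2 * ((2:ℝ)^(j+1))⁻¹ := by linarith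
      _ = 2 / 2^(j+1) := by rw [div_eq_mul_inv]
  · -- third branch: floor = j exactly
    have hfl : ⌊(x - δ/8) / (δ/(8*(L:ℝ)))⌋ = (j:ℤ) := by
      rw [Int.floor_eq_iff]
      constructor
      · push_cast
        rw [le_div_iff₀ hw]
        linarith
      · push_cast
        rw [div_lt_iff₀ hw]
        linarith
    rw [hfl]
    simp

lemma myNu_Ico_le (hδ : 0 < δ) {a b D : ℝ} (hD0 : 0 ≤ D)
    (hD : ∀ x ∈ Set.Ico a b, distDensity δ L x ≤ D) :
    (volume.withDensity fun x => ENNReal.ofReal (distDensity δ L x)) (Set.Ico a b)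
      ≤ ENNReal.ofReal ((b-a)*D) := by
  rw [withDensity_apply _ measurableSet_Ico]
  calc ∫⁻ x in Set.Ico a b, ENNReal.ofReal (distDensity δ L x)
      ≤ ∫⁻ _ in Set.Ico a b, ENNReal.ofReal D := by
        apply setLIntegral_mono measurable_const
        intro x hx
        exact ENNReal.ofReal_le_ofReal (hD x hx)
    _ = ENNReal.ofReal D * volume (Set.Ico a b) := setLIntegral_const _ _
    _ = ENNReal.ofReal D * ENNReal.ofReal (b - a) := by rw [Real.volume_Ico]
    _ = ENNReal.ofReal ((b-a)*D) := by rw [← ENNReal.ofReal_mul hD0, mul_comm]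

lemma myNu_Ico_ge (hδ : 0 < δ) {a b D : ℝ} (hab : a ≤ b) (hD0 : 0 ≤ D)
    (hD : ∀ x ∈ Set.Ico a b, D ≤ distDensity δ L x) :
    ENNReal.ofReal ((b-a)*D)
      ≤ (volume.withDensity fun x => ENNReal.ofReal (distDensity δ L x)) (Set.Ico a b) := by
  rw [withDensity_apply _ measurableSet_Ico]
  calc ENNReal.ofReal ((b-a)*D)
      = ENNReal.ofReal D * volume (Set.Ico a b) := by
        rw [Real.volume_Ico, ← ENNReal.ofReal_mul hD0, mul_comm]
    _ = ∫⁻ x, (Set.Ico a b).indicator (fun _ => ENNReal.ofReal D) x := by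
        rw [lintegral_indicator_const measurableSet_Ico]
    _ ≤ ∫⁻ x, (Set.Ico a b).indicator (fun x => ENNReal.ofReal (distDensity δ L x)) x := by
        apply lintegral_mono
        intro x
        by_cases hx : x ∈ Set.Ico a b
        · simp only [Set.indicator_of_mem hx]
          exact ENNReal.ofReal_le_ofReal (hD x hx)
        · simp [Set.indicator_of_notMem hx]
    _ = ∫⁻ x in Set.Ico a b, ENNReal.ofReal (distDensity δ L x) := by
        rw [lintegral_indicator measurableSet_Ico]

lemma myTelescope {m : ℕ} (S : Finset (Fin m)) (q : Fin m → ℝ)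
    (h0 : ∀ i, 0 ≤ q i) (h1 : ∀ i, q i ≤ 1) :
    ∑ i ∈ S, q i * ∏ l ∈ S.filter (fun l => l < i), (1 - q l) ≤ 1 := by
  have key : ∀ T : Finset (Fin m),
      ∑ i ∈ T, q i * ∏ l ∈ T.filter (fun l => l < i), (1 - q l)
        = 1 - ∏ l ∈ T, (1 - q l) := by
    intro T
    induction T using Finset.induction_on_max with
    | empty => simp
    | insert a s ha ih =>
      have has : a ∉ s := fun h => lt_irrefl a (ha a h)
      rw [Finset.sum_insert has, Finset.prod_insert has]
      have hfa : (insert a s).filter (fun l => l < a) = s := by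
        rw [Finset.filter_insert]
        simp only [lt_irrefl, if_false]
        exact Finset.filter_true_of_mem (fun x hx => ha x hx)
      have hfi : ∀ i ∈ s, (insert a s).filter (fun l => l < i) = s.filter (fun l => l < i) := by
        intro i hi
        rw [Finset.filter_insert]
        have : ¬ a < i := not_lt.2 (ha i hi).le
        simp [this]
      rw [hfa]
      rw [Finset.sum_congr rfl (fun i hi => by rw [hfi i hi])]
      rw [ih]
      ring
  rw [key]
  have : (0:ℝ) ≤ ∏ l ∈ S, (1 - q l) :=
    Finset.prod_nonneg (fun l _ => by linarith [h1 l])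
  linarith

end Aux

set_option maxHeartbeats 1000000 in
/-- There is an absolute constant `c > 0` with the following property.  In the
setting of the random partition (blocks `P_i` built from independent
`β_1, …, β_m` with density `f = distDensity (diam P) L`, where `n = 2^L ≥
max(m,4)` is a power of two), for every `y ∈ Z` and every
`0 ≤ r ≤ diam(P)/(16 log₂ n)`, the expected number of indices `i` such that
`P_i` *non-terminally* intersects `B(y,r)` (i.e. `P_i ∩ B(y,r) ≠ ∅` and some
later block also meets `B(y,r)`) is at most `c·(r/diam P)·log₂ n`. -/
theorem expected_blocks_nonterminally_intersecting_ball_le :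
    ∃ c : ℝ, 0 < c ∧
      ∀ (Z : Type) [MetricSpace Z] [Finite Z]
        (m : ℕ) (_ : 2 ≤ m) (p : Fin m → Z) (_ : Function.Injective p)
        (P : Set Z) (_ : P = Set.range p) (_ : 0 < Metric.diam P)
        (L : ℕ) (_ : 2 ≤ L) (_ : m ≤ 2^L)
        (Ω : Type) [MeasurableSpace Ω] (μ : Measure Ω) [IsProbabilityMeasure μ]
        (β : Fin m → Ω → ℝ) (_ : ∀ i, Measurable (β i))
        (_ : ProbabilityTheory.iIndepFun β μ)
        (_ : ∀ i, Measure.map (β i) μ =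
          volume.withDensity (fun x => ENNReal.ofReal (distDensity (Metric.diam P) L x)))
        (Pblk : Fin m → Ω → Set Z)
        (_ : ∀ ω i, Pblk i ω =
          {x | x ∈ P ∧ (∀ j, j < i → x ∉ Pblk j ω) ∧ dist x (p i) ≤ β i ω})
        (y : Z) (r : ℝ) (_ : 0 ≤ r) (_ : r ≤ Metric.diam P / (16 * (L:ℝ))),
        (∫ ω, (∑ i : Fin m,
            if ((Pblk i ω ∩ Metric.closedBall y r).Nonempty ∧
                ∃ j, i < j ∧ (Pblk j ω ∩ Metric.closedBall y r).Nonempty)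
            then (1:ℝ) else 0) ∂μ)
          ≤ c * (r / Metric.diam P) * (L:ℝ) := by
  refine ⟨192, by norm_num, ?_⟩
  intro Z _ _ m hm p hinj P hP hdiam L hL hm2L Ω _ μ hμprob β hmeas hInd hmap Pblk hPblk y r hr hrle
  set δ := Metric.diam P with hδdef
  have hδ : 0 < δ := hdiam
  have hLpos : (0:ℝ) < (L:ℝ) := by positivity
  have hL0 : (L:ℝ) ≠ 0 := ne_of_gt hLpos
  set ν := volume.withDensity (fun x => ENNReal.ofReal (distDensity δ L x)) with hνdef
  haveI hνprob : IsProbabilityMeasure ν := by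
    rw [← hmap ⟨0, by omega⟩]
    exact Measure.isProbabilityMeasure_map (hmeas _).aemeasurable
  have hpre : ∀ (i : Fin m) (A : Set ℝ), MeasurableSet A → μ (β i ⁻¹' A) = ν A := by
    intro i A hA
    rw [← Measure.map_apply (hmeas i) hA, hmap i]
  -- notation
  set E : Fin m → Set Ω := fun i => {ω | (Pblk i ω ∩ Metric.closedBall y r).Nonempty ∧
                ∃ j, i < j ∧ (Pblk j ω ∩ Metric.closedBall y r).Nonempty} with hEdef
  -- combinatorial key lemma
  have key1 : ∀ (ω : Ω) (l j : Fin m), l < j → dist (p l) y + r ≤ β l ω →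
      Pblk j ω ∩ Metric.closedBall y r = ∅ := by
    intro ω l j hlj hβ
    rw [Set.eq_empty_iff_forall_notMem]
    rintro x ⟨hxj, hxb⟩
    rw [hPblk ω j] at hxj
    obtain ⟨hxP, hnot, _⟩ := hxj
    refine hnot l hlj ?_
    rw [hPblk ω l]
    refine ⟨hxP, fun l' hl' => hnot l' (hl'.trans hlj), ?_⟩
    have h1 : dist x (p l) ≤ dist x y + dist y (p l) := dist_triangle x y (p l)
    have h2 : dist x y ≤ r := Metric.mem_closedBall.mp hxb
    have h3 : dist y (p l) = dist (p l) y := dist_comm y (p l)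
    linarith
  -- measurability of block membership
  have M : ∀ (n : ℕ) (i : Fin m), (i:ℕ) < n → ∀ x : Z, MeasurableSet {ω | x ∈ Pblk i ω} := by
    intro n
    induction n with
    | zero => intro i hi; omega
    | succ n ih =>
      intro i hi x
      have hset : {ω | x ∈ Pblk i ω}
          = {ω : Ω | x ∈ P} ∩ ((⋂ (j : Fin m) (_ : j < i), {ω | x ∈ Pblk j ω}ᶜ)
              ∩ (β i ⁻¹' Set.Ici (dist x (p i)))) := by
        ext ω
        simp only [Set.mem_setOf_eq, Set.mem_inter_iff, Set.mem_iInter, Set.mem_compl_iff,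
          Set.mem_preimage, Set.mem_Ici]
        rw [hPblk ω i]
        simp only [Set.mem_setOf_eq]
      rw [hset]
      refine MeasurableSet.inter ?_ (MeasurableSet.inter ?_ ?_)
      · by_cases hx : x ∈ P
        · simp [hx]
        · simp [hx]
      · exact MeasurableSet.iInter fun j => MeasurableSet.iInter fun hj =>
          (ih j (Nat.lt_of_lt_of_le (Fin.lt_def.mp hj) (Nat.lt_succ_iff.mp hi)) x).compl
      · exact (hmeas i) measurableSet_Ici
  have M' : ∀ (i : Fin m) (x : Z), MeasurableSet {ω | x ∈ Pblk i ω} :=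
    fun i x => M m i i.isLt x
  have hN : ∀ i : Fin m, MeasurableSet {ω | (Pblk i ω ∩ Metric.closedBall y r).Nonempty} := by
    intro i
    have heq : {ω | (Pblk i ω ∩ Metric.closedBall y r).Nonempty}
        = ⋃ (x : Z), ⋃ (_ : x ∈ Metric.closedBall y r), {ω | x ∈ Pblk i ω} := by
      ext ω
      simp only [Set.mem_setOf_eq, Set.mem_iUnion]
      constructor
      · rintro ⟨x, hx1, hx2⟩; exact ⟨x, hx2, hx1⟩
      · rintro ⟨x, hx2, hx1⟩; exact ⟨x, hx1, hx2⟩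
    rw [heq]
    exact MeasurableSet.iUnion fun x => MeasurableSet.iUnion fun _ => M' i x
  have hEmeas : ∀ i, MeasurableSet (E i) := by
    intro i
    have heq : E i = {ω | (Pblk i ω ∩ Metric.closedBall y r).Nonempty}
        ∩ ⋃ (j : Fin m), ⋃ (_ : i < j), {ω | (Pblk j ω ∩ Metric.closedBall y r).Nonempty} := by
      ext ω
      simp only [hEdef, Set.mem_setOf_eq, Set.mem_inter_iff, Set.mem_iUnion, exists_prop]
    rw [heq]
    exact (hN i).inter (MeasurableSet.iUnion fun j => MeasurableSet.iUnion fun _ => hN j)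
  -- rewrite the integral
  have hrep : ∀ i : Fin m, (fun ω => if ((Pblk i ω ∩ Metric.closedBall y r).Nonempty ∧
                ∃ j, i < j ∧ (Pblk j ω ∩ Metric.closedBall y r).Nonempty) then (1:ℝ) else 0)
      = (E i).indicator (fun _ => (1:ℝ)) := by
    intro i
    funext ω
    by_cases h : ((Pblk i ω ∩ Metric.closedBall y r).Nonempty ∧
                ∃ j, i < j ∧ (Pblk j ω ∩ Metric.closedBall y r).Nonempty)
    · rw [if_pos h, Set.indicator_of_mem (by exact h)]
    · rw [if_neg h, Set.indicator_of_notMem (by exact h)]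
  have hint : ∀ i ∈ Finset.univ, Integrable (fun ω => if ((Pblk i ω ∩ Metric.closedBall y r).Nonempty ∧
                ∃ j, i < j ∧ (Pblk j ω ∩ Metric.closedBall y r).Nonempty) then (1:ℝ) else 0) μ := by
    intro i _
    rw [hrep i]
    exact (integrable_const (1:ℝ)).indicator (hEmeas i)
  rw [integral_finset_sum _ hint]
  have hival : ∀ i : Fin m, (∫ ω, (if ((Pblk i ω ∩ Metric.closedBall y r).Nonempty ∧
                ∃ j, i < j ∧ (Pblk j ω ∩ Metric.closedBall y r).Nonempty) then (1:ℝ) else 0) ∂μ)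
      = (μ (E i)).toReal := by
    intro i
    rw [hrep i, integral_indicator_const (1:ℝ) (hEmeas i), smul_eq_mul, mul_one]
    rfl
  rw [Finset.sum_congr rfl (fun i _ => hival i)]
  -- from here on: bound ∑ i, (μ (E i)).toReal
  haveI := hμprob
  have h2r : 2*r ≤ δ/(8*(L:ℝ)) := by
    have e : δ/(8*(L:ℝ)) = 2*(δ/(16*(L:ℝ))) := by field_simp; ring
    linarith
  have hwpos : (0:ℝ) < δ/(8*(L:ℝ)) := by positivity
  have he4 : δ/4 = δ/8 + (L:ℝ)*(δ/(8*(L:ℝ))) := by field_simp; ring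
  set S : Finset (Fin m) := Finset.univ.filter
      (fun i => δ/8 < dist (p i) y + r ∧ dist (p i) y + r ≤ δ/4 - δ/(8*(L:ℝ))) with hSdef
  set q : Fin m → ℝ := fun i => (ν (Set.Ici (dist (p i) y + r))).toReal with hqdef
  have hq0 : ∀ i, 0 ≤ q i := fun i => ENNReal.toReal_nonneg
  have hq1 : ∀ i, q i ≤ 1 := by
    intro i
    have h := prob_le_one (μ := ν) (s := Set.Ici (dist (p i) y + r))
    have := ENNReal.toReal_mono ENNReal.one_ne_top h
    simpa using this
  have hIio : ∀ i, (ν (Set.Iio (dist (p i) y + r))).toReal = 1 - q i := by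
    intro i
    have hd : Disjoint (Set.Iio (dist (p i) y + r)) (Set.Ici (dist (p i) y + r)) :=
      Set.Iio_disjoint_Ici le_rfl
    have hu : ν (Set.Iio (dist (p i) y + r)) + ν (Set.Ici (dist (p i) y + r)) = 1 := by
      rw [← measure_union hd measurableSet_Ici, Set.Iio_union_Ici, measure_univ]
    have h2 := congrArg ENNReal.toReal hu
    rw [ENNReal.toReal_add (measure_ne_top _ _) (measure_ne_top _ _), ENNReal.toReal_one] at h2
    simp only [hqdef]
    linarith
  -- inclusion of events in β-events
  have hsubA : ∀ i : Fin m,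
      E i ⊆ β i ⁻¹' (Set.Ico (dist (p i) y - r) (dist (p i) y + r)) := by
    intro i ω hω
    obtain ⟨⟨x, hx⟩, j, hij, hj⟩ := hω
    refine Set.mem_preimage.mpr (Set.mem_Ico.mpr ⟨?_, ?_⟩)
    · obtain ⟨hx1, hx2⟩ := hx
      rw [hPblk ω i] at hx1
      obtain ⟨_, _, hd⟩ := hx1
      have h1 : dist (p i) y ≤ dist (p i) x + dist x y := dist_triangle _ _ _
      have h2 : dist x y ≤ r := Metric.mem_closedBall.mp hx2
      have h3 : dist (p i) x = dist x (p i) := dist_comm _ _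
      linarith
    · by_contra hcon
      push_neg at hcon
      have hkey := key1 ω i j hij hcon
      rw [hkey] at hj
      exact Set.not_nonempty_empty hj
  have hsubB : ∀ i l : Fin m, l < i →
      E i ⊆ β l ⁻¹' (Set.Iio (dist (p l) y + r)) := by
    intro i l hli ω hω
    obtain ⟨⟨x, hx⟩, _⟩ := hω
    refine Set.mem_preimage.mpr ?_
    simp only [Set.mem_Iio]
    by_contra hcon
    push_neg at hcon
    have hkey := key1 ω l i hli hcon
    rw [hkey] at hx
    simpa using hx
  have hEleA : ∀ i : Fin m, (μ (E i)).toReal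
      ≤ (ν (Set.Ico (dist (p i) y - r) (dist (p i) y + r))).toReal := by
    intro i
    have h1 : μ (E i) ≤ μ (β i ⁻¹' Set.Ico (dist (p i) y - r) (dist (p i) y + r)) :=
      measure_mono (hsubA i)
    rw [hpre i _ measurableSet_Ico] at h1
    exact ENNReal.toReal_mono (measure_ne_top _ _) h1
  -- numerator and denominator bounds for good indices
  have hgoodnum : ∀ i ∈ S, (ν (Set.Ico (dist (p i) y - r) (dist (p i) y + r))).toReal
      ≤ 128*(r*(L:ℝ)/δ) * q i := by
    intro i hiS
    obtain ⟨hg1, hg2⟩ := (Finset.mem_filter.mp hiS).2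
    set b := dist (p i) y + r with hb
    set a := dist (p i) y - r with ha
    set w := δ/(8*(L:ℝ)) with hw
    set jz : ℤ := ⌈(b - δ/8)/w⌉ with hjz
    set jn : ℕ := jz.toNat with hjn
    have hx0pos : 0 < (b - δ/8)/w := div_pos (by linarith) hwpos
    have hjz1 : 1 ≤ jz := Int.ceil_pos.mpr hx0pos
    have hjzL : jz ≤ (L:ℤ) - 1 := by
      rw [hjz, Int.ceil_le]
      push_cast
      rw [div_le_iff₀ hwpos]
      nlinarith [he4, hg2]
    have hjncast : (jn:ℝ) = (jz:ℝ) := by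
      have h := Int.toNat_of_nonneg (by omega : (0:ℤ) ≤ jz)
      exact_mod_cast congrArg (fun z : ℤ => (z:ℝ)) h
    have hjn1 : 1 ≤ jn := by omega
    have hjnL : jn ≤ L - 1 := by omega
    have hble : b ≤ δ/8 + (jn:ℝ)*w := by
      have h := Int.le_ceil ((b - δ/8)/w)
      rw [← hjz] at h
      rw [div_le_iff₀ hwpos] at h
      rw [hjncast]
      linarith
    have hbgt : δ/8 + ((jn:ℝ)-1)*w < b := by
      have h := Int.ceil_lt_add_one ((b - δ/8)/w)
      rw [← hjz] at h
      have h' : (jz:ℝ) - 1 < (b - δ/8)/w := by linarith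
      rw [lt_div_iff₀ hwpos] at h'
      rw [hjncast]
      linarith
    -- numerator
    have hupper : ∀ x ∈ Set.Ico a b,
        distDensity δ L x ≤ (8*(L:ℝ)/δ) * (2*(1/2:ℝ)^(jn-1)) := by
      intro x hx
      apply myDistDensity_upper hδ hL (jn-1) (by omega) x
      have hcast : ((jn-1:ℕ):ℝ) = (jn:ℝ) - 1 := by
        push_cast [Nat.cast_sub hjn1]
        ring
      rw [hcast, ← hw]
      have hxa := hx.1
      nlinarith [hbgt, h2r, hx.1]
    have hnu_up : (ν (Set.Ico a b)).toReal
        ≤ 2*r * ((8*(L:ℝ)/δ) * (2*(1/2:ℝ)^(jn-1))) := by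
      have h := myNu_Ico_le (L := L) hδ (by positivity) hupper
      rw [← hνdef] at h
      have hba : b - a = 2*r := by rw [hb, ha]; ring
      rw [hba] at h
      calc (ν (Set.Ico a b)).toReal
          ≤ (ENNReal.ofReal (2*r * ((8*(L:ℝ)/δ) * (2*(1/2:ℝ)^(jn-1))))).toReal :=
            ENNReal.toReal_mono ENNReal.ofReal_ne_top h
        _ = 2*r * ((8*(L:ℝ)/δ) * (2*(1/2:ℝ)^(jn-1))) :=
            ENNReal.toReal_ofReal (by positivity)
    -- denominator
    have hlowset : ∀ x ∈ Set.Ico (δ/8 + (jn:ℝ)*w) (δ/8 + ((jn:ℝ)+1)*w),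
        (8*(L:ℝ)/δ) * (1/2:ℝ)^(jn+1) ≤ distDensity δ L x := by
      intro x hx
      exact myDistDensity_lower hδ hL jn (by omega) x (by rw [← hw]; exact hx.1)
        (by rw [← hw]; exact hx.2)
    have hnu_low : (1/2:ℝ)^(jn+1) ≤ q i := by
      have hab : δ/8 + (jn:ℝ)*w ≤ δ/8 + ((jn:ℝ)+1)*w := by nlinarith [hwpos]
      have h := myNu_Ico_ge (L := L) hδ hab (by positivity) hlowset
      rw [← hνdef] at h
      have hwidth : (δ/8 + ((jn:ℝ)+1)*w - (δ/8 + (jn:ℝ)*w)) * ((8*(L:ℝ)/δ) * (1/2:ℝ)^(jn+1))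
          = (1/2:ℝ)^(jn+1) := by
        have hw1 : w * (8*(L:ℝ)/δ) = 1 := by
          rw [hw, div_mul_div_comm, mul_comm]
          exact div_self (by positivity)
        have : δ/8 + ((jn:ℝ)+1)*w - (δ/8 + (jn:ℝ)*w) = w := by ring
        rw [this, ← mul_assoc, hw1, one_mul]
      rw [hwidth] at h
      have hsubI : Set.Ico (δ/8 + (jn:ℝ)*w) (δ/8 + ((jn:ℝ)+1)*w) ⊆ Set.Ici b :=
        fun x hx => le_trans hble hx.1
      have hmono : ν (Set.Ico (δ/8 + (jn:ℝ)*w) (δ/8 + ((jn:ℝ)+1)*w)) ≤ ν (Set.Ici b) :=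
        measure_mono hsubI
      have hfin := ENNReal.toReal_mono (measure_ne_top ν _) (le_trans h hmono)
      rw [ENNReal.toReal_ofReal (by positivity)] at hfin
      exact hfin
    -- combine
    have hpowsplit : (1/2:ℝ)^(jn-1) = 4*(1/2:ℝ)^(jn+1) := by
      have hjeq : jn + 1 = (jn - 1) + 2 := by omega
      rw [hjeq, pow_add]
      norm_num
      ring
    calc (ν (Set.Ico a b)).toReal
        ≤ 2*r * ((8*(L:ℝ)/δ) * (2*(1/2:ℝ)^(jn-1))) := hnu_up
      _ = 128*(r*(L:ℝ)/δ) * (1/2:ℝ)^(jn+1) := by rw [hpowsplit]; ring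
      _ ≤ 128*(r*(L:ℝ)/δ) * q i := by
          apply mul_le_mul_of_nonneg_left hnu_low (by positivity)
  -- independence: product bound for good indices
  have hgoodprod : ∀ i ∈ S, (μ (E i)).toReal
      ≤ (ν (Set.Ico (dist (p i) y - r) (dist (p i) y + r))).toReal
        * ∏ l ∈ S.filter (fun l => l < i), (1 - q l) := by
    intro i hiS
    set T := S.filter (fun l => l < i) with hT
    have hiT : i ∉ T := by
      simp only [hT, Finset.mem_filter]
      rintro ⟨-, h⟩
      exact lt_irrefl i h
    set sets : Fin m → Set ℝ := fun l =>
      if l = i then Set.Ico (dist (p i) y - r) (dist (p i) y + r)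
      else Set.Iio (dist (p l) y + r) with hsets
    have hmeasets : ∀ l, l ∈ insert i T → MeasurableSet (sets l) := by
      intro l _
      by_cases h : l = i <;> simp [hsets, h]
    have hprodμ := hInd.measure_inter_preimage_eq_mul (insert i T) hmeasets
    have hsubset : E i ⊆ ⋂ l ∈ insert i T, β l ⁻¹' sets l := by
      intro ω hω
      simp only [Set.mem_iInter]
      intro l hl
      by_cases h : l = i
      · subst h
        simp only [hsets, if_pos rfl]
        exact hsubA l hω
      · have hlT : l ∈ T := by
          rcases Finset.mem_insert.mp hl with h' | h'
          · exact absurd h' h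
          · exact h'
        have hli : l < i := (Finset.mem_filter.mp hlT).2
        simp only [hsets, if_neg h]
        exact hsubB i l hli hω
    calc (μ (E i)).toReal
        ≤ (μ (⋂ l ∈ insert i T, β l ⁻¹' sets l)).toReal :=
          ENNReal.toReal_mono (measure_ne_top _ _) (measure_mono hsubset)
      _ = (∏ l ∈ insert i T, μ (β l ⁻¹' sets l)).toReal := by rw [hprodμ]
      _ = ∏ l ∈ insert i T, (μ (β l ⁻¹' sets l)).toReal := by rw [ENNReal.toReal_prod]
      _ = (μ (β i ⁻¹' sets i)).toReal * ∏ l ∈ T, (μ (β l ⁻¹' sets l)).toReal :=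
          by rw [Finset.prod_insert hiT]
      _ = (ν (Set.Ico (dist (p i) y - r) (dist (p i) y + r))).toReal
            * ∏ l ∈ T, (1 - q l) := by
          congr 1
          · have hseq : sets i = Set.Ico (dist (p i) y - r) (dist (p i) y + r) := by
              simp [hsets]
            rw [hseq, hpre i _ measurableSet_Ico]
          · refine Finset.prod_congr rfl (fun l hl => ?_)
            have hli : l < i := (Finset.mem_filter.mp hl).2
            have hlne : l ≠ i := ne_of_lt hli
            have hseq : sets l = Set.Iio (dist (p l) y + r) := by
              simp [hsets, hlne]
            rw [hseq, hpre l _ measurableSet_Iio, hIio l]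
  -- bad indices
  have hbadnum : ∀ i : Fin m, δ/4 - δ/(8*(L:ℝ)) < dist (p i) y + r →
      (ν (Set.Ico (dist (p i) y - r) (dist (p i) y + r))).toReal
        ≤ 64*(r*(L:ℝ)/δ)*(1/2:ℝ)^L := by
    intro i hc
    have hupper : ∀ x ∈ Set.Ico (dist (p i) y - r) (dist (p i) y + r),
        distDensity δ L x ≤ (8*(L:ℝ)/δ) * (2*(1/2:ℝ)^(L-1)) := by
      intro x hx
      apply myDistDensity_upper hδ hL (L-1) (by omega) x
      have hcast : ((L-1:ℕ):ℝ) = (L:ℝ) - 1 := by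
        push_cast [Nat.cast_sub (by omega : 1 ≤ L)]
        ring
      rw [hcast]
      have hxa := hx.1
      nlinarith [he4, h2r, hc]
    have h := myNu_Ico_le (L := L) hδ (by positivity) hupper
    rw [← hνdef] at h
    have hba : dist (p i) y + r - (dist (p i) y - r) = 2*r := by ring
    rw [hba] at h
    have hfin := ENNReal.toReal_mono ENNReal.ofReal_ne_top h
    rw [ENNReal.toReal_ofReal (by positivity)] at hfin
    have hpw : (1/2:ℝ)^(L-1) = 2*(1/2:ℝ)^L := by
      have hjeq : L = (L - 1) + 1 := by omega
      calc (1/2:ℝ)^(L-1) = 2*((1/2:ℝ)^(L-1) * (1/2)) := by ring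
        _ = 2*(1/2:ℝ)^((L-1)+1) := by rw [pow_succ]
        _ = 2*(1/2:ℝ)^L := by rw [← hjeq]
    calc (ν (Set.Ico (dist (p i) y - r) (dist (p i) y + r))).toReal
        ≤ 2*r * ((8*(L:ℝ)/δ) * (2*(1/2:ℝ)^(L-1))) := hfin
      _ = 64*(r*(L:ℝ)/δ)*(1/2:ℝ)^L := by rw [hpw]; ring
  -- trivial indices
  have hzeronum : ∀ i : Fin m, dist (p i) y + r ≤ δ/8 →
      (ν (Set.Ico (dist (p i) y - r) (dist (p i) y + r))).toReal ≤ 0 := by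
    intro i hc
    have hupper : ∀ x ∈ Set.Ico (dist (p i) y - r) (dist (p i) y + r),
        distDensity δ L x ≤ 0 := by
      intro x hx
      have hxlt : x < δ/8 := lt_of_lt_of_le hx.2 hc
      unfold distDensity
      rw [if_pos (Or.inl hxlt)]
    have h := myNu_Ico_le (L := L) hδ le_rfl hupper
    rw [← hνdef] at h
    have hfin := ENNReal.toReal_mono ENNReal.ofReal_ne_top h
    rw [ENNReal.toReal_ofReal (by simp)] at hfin
    simpa using hfin
  -- main per-index bound
  have hmain : ∀ i : Fin m, (μ (E i)).toReal
      ≤ (if i ∈ S then 128*(r*(L:ℝ)/δ) * (q i * ∏ l ∈ S.filter (fun l => l < i), (1 - q l))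
          else 0) + 64*(r*(L:ℝ)/δ)*(1/2:ℝ)^L := by
    intro i
    have hconst : 0 ≤ 64*(r*(L:ℝ)/δ)*(1/2:ℝ)^L := by positivity
    by_cases hiS : i ∈ S
    · rw [if_pos hiS]
      have hprodnn : 0 ≤ ∏ l ∈ S.filter (fun l => l < i), (1 - q l) :=
        Finset.prod_nonneg fun l _ => by linarith [hq1 l]
      have hchain : (μ (E i)).toReal
          ≤ 128*(r*(L:ℝ)/δ) * (q i * ∏ l ∈ S.filter (fun l => l < i), (1 - q l)) := by
        calc (μ (E i)).toReal
            ≤ (ν (Set.Ico (dist (p i) y - r) (dist (p i) y + r))).toReal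
              * ∏ l ∈ S.filter (fun l => l < i), (1 - q l) := hgoodprod i hiS
          _ ≤ (128*(r*(L:ℝ)/δ) * q i) * ∏ l ∈ S.filter (fun l => l < i), (1 - q l) :=
              mul_le_mul_of_nonneg_right (hgoodnum i hiS) hprodnn
          _ = 128*(r*(L:ℝ)/δ) * (q i * ∏ l ∈ S.filter (fun l => l < i), (1 - q l)) := by ring
      linarith
    · rw [if_neg hiS]
      rw [zero_add]
      have hEA := hEleA i
      rcases le_or_gt (dist (p i) y + r) (δ/8) with hc | hc
      · have := hzeronum i hc
        linarith
      · have hbad : δ/4 - δ/(8*(L:ℝ)) < dist (p i) y + r := by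
          by_contra hcon
          push_neg at hcon
          exact hiS (Finset.mem_filter.mpr ⟨Finset.mem_univ i, hc, hcon⟩)
        have := hbadnum i hbad
        linarith
  -- assembly
  have hKpos : (0:ℝ) ≤ r*(L:ℝ)/δ := by positivity
  calc ∑ i : Fin m, (μ (E i)).toReal
      ≤ ∑ i : Fin m, ((if i ∈ S then
            128*(r*(L:ℝ)/δ) * (q i * ∏ l ∈ S.filter (fun l => l < i), (1 - q l)) else 0)
          + 64*(r*(L:ℝ)/δ)*(1/2:ℝ)^L) :=
        Finset.sum_le_sum (fun i _ => hmain i)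
    _ = (∑ i : Fin m, if i ∈ S then
            128*(r*(L:ℝ)/δ) * (q i * ∏ l ∈ S.filter (fun l => l < i), (1 - q l)) else 0)
          + (m:ℝ) * (64*(r*(L:ℝ)/δ)*(1/2:ℝ)^L) := by
        rw [Finset.sum_add_distrib, Finset.sum_const, Finset.card_univ, Fintype.card_fin,
          nsmul_eq_mul]
    _ ≤ 128*(r*(L:ℝ)/δ) + (2:ℝ)^L * (64*(r*(L:ℝ)/δ)*(1/2:ℝ)^L) := by
        gcongr ?_ + ?_
        · have hsum : (∑ i : Fin m, if i ∈ S then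
              128*(r*(L:ℝ)/δ) * (q i * ∏ l ∈ S.filter (fun l => l < i), (1 - q l)) else 0)
              = ∑ i ∈ S, 128*(r*(L:ℝ)/δ) * (q i * ∏ l ∈ S.filter (fun l => l < i), (1 - q l)) := by
            rw [Finset.sum_ite_mem, Finset.univ_inter]
          rw [hsum]
          have htel := myTelescope S q hq0 hq1
          calc ∑ i ∈ S, 128*(r*(L:ℝ)/δ) * (q i * ∏ l ∈ S.filter (fun l => l < i), (1 - q l))
              = 128*(r*(L:ℝ)/δ) * ∑ i ∈ S, q i * ∏ l ∈ S.filter (fun l => l < i), (1 - q l) := by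
                rw [Finset.mul_sum]
            _ ≤ 128*(r*(L:ℝ)/δ) * 1 := by
                apply mul_le_mul_of_nonneg_left htel (by positivity)
            _ = 128*(r*(L:ℝ)/δ) := by ring
        · have hmle : (m:ℝ) ≤ (2:ℝ)^L := by exact_mod_cast hm2L
          apply mul_le_mul_of_nonneg_right hmle (by positivity)
    _ = 192*(r*(L:ℝ)/δ) := by
        have hpw : (2:ℝ)^L * (1/2:ℝ)^L = 1 := by
          rw [one_div, inv_pow, mul_inv_cancel₀ (by positivity)]
        calc 128*(r*(L:ℝ)/δ) + (2:ℝ)^L * (64*(r*(L:ℝ)/δ)*(1/2:ℝ)^L)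
            = 128*(r*(L:ℝ)/δ) + ((2:ℝ)^L * (1/2:ℝ)^L) * (64*(r*(L:ℝ)/δ)) := by ring
          _ = 192*(r*(L:ℝ)/δ) := by rw [hpw]; ring
    _ = 192 * (r/δ) * (L:ℝ) := by ring
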